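/- Let 0 < q < 1, let a > 0 and let r be a real number with r > −1. Then ∫_0^a ω^r · (qω/a; q)_∞ d_qω = (1−q)·a^{r+1}·(q; q)_∞/(q^{r+1}; q)_∞; explicitly, (1−q)·a^{r+1}·∑_{k=0}^∞ q^{k(r+1)}·(q^{k+1}; q)_∞ = (1−q)·a^{r+1}·(q; q)_∞/(q^{r+1}; q)_∞. (When r is a nonnegative integer the right-hand side equals (1−q)·a^{r+1}·(q;q)_r with (q;q)_r = (1−q)(1−q²)⋯(1−q^r).) -/

import Mathlib

/-- The infinite q-Pochhammer symbol `(x; q)_∞ = ∏_{k=0}^∞ (1 − qᵏx)` over `ℝ`. -/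
noncomputable def qPochR (q x : ℝ) : ℝ :=
  ∏' k : ℕ, (1 - q ^ k * x)

/-- The Jackson integral on `[0,a]`, `a > 0`: `∫_0^a f(ω) d_qω = (1−q)·a·∑_{k=0}^∞ qᵏf(qᵏa)`. -/
noncomputable def jackson0 (q a : ℝ) (f : ℝ → ℝ) : ℝ :=
  (1 - q) * a * ∑' k : ℕ, q ^ k * f (q ^ k * a)

open Real Filter

section
variable {q : ℝ} (hq0 : 0 < q) (hq1 : q < 1)
include hq0 hq1

lemma factor_pos {x : ℝ} (hx0 : 0 ≤ x) (hx1 : x < 1) (k : ℕ) : 0 < 1 - q ^ k * x := by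
  have h1 : q ^ k ≤ 1 := pow_le_one₀ hq0.le hq1.le
  have : q ^ k * x ≤ x := by
    calc q ^ k * x ≤ 1 * x := by gcongr
    _ = x := one_mul x
  linarith

lemma summable_log {x : ℝ} (hx0 : 0 ≤ x) (hx1 : x < 1) :
    Summable fun k : ℕ => Real.log (1 - q ^ k * x) := by
  rw [← summable_neg_iff]
  apply Summable.of_nonneg_of_le (fun k => ?_) (fun k => ?_)
    (((summable_geometric_of_lt_one hq0.le hq1).mul_left (x / (1 - x))))
  · simp only [neg_nonneg]
    apply Real.log_nonpos
    · exact (factor_pos hq0 hq1 hx0 hx1 k).le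
    · nlinarith [pow_pos hq0 k, pow_le_one₀ hq0.le hq1.le (n := k)]
  · have hp := factor_pos hq0 hq1 hx0 hx1 k
    have h2 : Real.log ((1 - q ^ k * x)⁻¹) ≤ (1 - q ^ k * x)⁻¹ - 1 :=
      Real.log_le_sub_one_of_pos (by positivity)
    rw [Real.log_inv] at h2
    have h3 : (1 - q ^ k * x)⁻¹ - 1 = q ^ k * x / (1 - q ^ k * x) := by
      field_simp
      ring
    have hqk1 : q ^ k ≤ 1 := pow_le_one₀ hq0.le hq1.le
    have h4 : q ^ k * x / (1 - q ^ k * x) ≤ q ^ k * x / (1 - x) := by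
      apply div_le_div_of_nonneg_left (by positivity) (by linarith) ?_
      nlinarith
    calc -Real.log (1 - q ^ k * x) ≤ q ^ k * x / (1 - x) := by linarith
    _ = x / (1 - x) * q ^ k := by ring

lemma qPochR_eq_exp {x : ℝ} (hx0 : 0 ≤ x) (hx1 : x < 1) :
    qPochR q x = Real.exp (∑' k : ℕ, Real.log (1 - q ^ k * x)) := by
  have := Real.rexp_tsum_eq_tprod (f := fun k => 1 - q ^ k * x)
    (fun k => factor_pos hq0 hq1 hx0 hx1 k) (summable_log hq0 hq1 hx0 hx1)
  simpa [qPochR] using this.symm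

lemma qPochR_pos {x : ℝ} (hx0 : 0 ≤ x) (hx1 : x < 1) : 0 < qPochR q x := by
  rw [qPochR_eq_exp hq0 hq1 hx0 hx1]; exact Real.exp_pos _

lemma qPochR_le_one {x : ℝ} (hx0 : 0 ≤ x) (hx1 : x < 1) : qPochR q x ≤ 1 := by
  rw [qPochR_eq_exp hq0 hq1 hx0 hx1]
  rw [Real.exp_le_one_iff]
  apply tsum_nonpos
  intro k
  apply Real.log_nonpos (factor_pos hq0 hq1 hx0 hx1 k).le
  nlinarith [pow_pos hq0 k, pow_le_one₀ hq0.le hq1.le (n := k), factor_pos hq0 hq1 hx0 hx1 k]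

lemma multipliable_qPochR {x : ℝ} (hx0 : 0 ≤ x) (hx1 : x < 1) :
    Multipliable fun k : ℕ => 1 - q ^ k * x := by
  exact Real.multipliable_of_summable_log (f := fun k => 1 - q ^ k * x)
    (fun k => factor_pos hq0 hq1 hx0 hx1 k) (summable_log hq0 hq1 hx0 hx1)

lemma qPochR_peel {x : ℝ} (hx0 : 0 ≤ x) (hx1 : x < 1) :
    qPochR q x = (1 - x) * qPochR q (q * x) := by
  have hqx0 : 0 ≤ q * x := by positivity
  have hqx1 : q * x < 1 := by nlinarith
  have hm : Multipliable fun n : ℕ => 1 - q ^ (n + 1) * x := by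
    have := multipliable_qPochR hq0 hq1 hqx0 hqx1
    apply this.congr
    intro n; ring
  have := tprod_eq_zero_mul' (f := fun k : ℕ => 1 - q ^ k * x) hm
  rw [qPochR, this]
  simp only [pow_zero, one_mul]
  congr 1
  rw [qPochR]
  apply tprod_congr
  intro n; ring
lemma qpow_mem (k : ℕ) : 0 ≤ q ^ (k + 1) ∧ q ^ (k + 1) < 1 :=
  ⟨(pow_pos hq0 _).le, pow_lt_one₀ hq0.le hq1 (Nat.succ_ne_zero k)⟩

lemma summable_G {t : ℝ} (ht0 : 0 ≤ t) (ht1 : t < 1) :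
    Summable fun k : ℕ => t ^ k * qPochR q (q ^ (k + 1)) := by
  apply Summable.of_nonneg_of_le (fun k => ?_) (fun k => ?_)
    (summable_geometric_of_lt_one ht0 ht1)
  · have := qPochR_pos hq0 hq1 (qpow_mem hq0 hq1 k).1 (qpow_mem hq0 hq1 k).2
    positivity
  · have h1 := qPochR_le_one hq0 hq1 (qpow_mem hq0 hq1 k).1 (qpow_mem hq0 hq1 k).2
    have h0 := (qPochR_pos hq0 hq1 (qpow_mem hq0 hq1 k).1 (qpow_mem hq0 hq1 k).2).le
    nlinarith [pow_nonneg ht0 k]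

lemma funcEq {t : ℝ} (ht0 : 0 ≤ t) (ht1 : t < 1) :
    (∑' k : ℕ, (q * t) ^ k * qPochR q (q ^ (k + 1)))
      = (1 - t) * ∑' k : ℕ, t ^ k * qPochR q (q ^ (k + 1)) := by
  have hqt0 : 0 ≤ q * t := by positivity
  have hqt1 : q * t < 1 := by nlinarith
  have hS := summable_G hq0 hq1 ht0 ht1
  have hSq := summable_G hq0 hq1 hqt0 hqt1
  set F : ℕ → ℝ := fun k => t ^ k * qPochR q (q ^ (k + 1))
      - (q * t) ^ k * qPochR q (q ^ (k + 1)) with hFdef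
  have hF : Summable F := hS.sub hSq
  have hF0 : F 0 = 0 := by simp [hFdef]
  have hshift : ∀ k : ℕ, F (k + 1) = t * (t ^ k * qPochR q (q ^ (k + 1))) := by
    intro k
    have hpeel := qPochR_peel hq0 hq1 (qpow_mem hq0 hq1 k).1 (qpow_mem hq0 hq1 k).2
    have hpow : q * q ^ (k + 1) = q ^ (k + 1 + 1) := by ring
    rw [hpow] at hpeel
    simp only [hFdef]
    rw [hpeel]; ring
  have hFsum : ∑' k, F k = t * ∑' k : ℕ, t ^ k * qPochR q (q ^ (k + 1)) := by
    rw [Summable.tsum_eq_zero_add hF, hF0, zero_add]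
    rw [tsum_congr hshift, tsum_mul_left]
  have hts := Summable.tsum_sub hS hSq
  have hkey : (∑' k : ℕ, t ^ k * qPochR q (q ^ (k + 1)))
      - (∑' k : ℕ, (q * t) ^ k * qPochR q (q ^ (k + 1)))
      = t * ∑' k : ℕ, t ^ k * qPochR q (q ^ (k + 1)) := by
    rw [← hFsum]
    simp only [hFdef]
    exact hts.symm
  linear_combination -hkey

lemma qsplit {t : ℝ} (ht0 : 0 ≤ t) (ht1 : t < 1) (N : ℕ) :
    (∑' k : ℕ, (q ^ N * t) ^ k * qPochR q (q ^ (k + 1)))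
      = (∏ j ∈ Finset.range N, (1 - q ^ j * t))
        * ∑' k : ℕ, t ^ k * qPochR q (q ^ (k + 1)) := by
  induction N with
  | zero => simp
  | succ N ih =>
    have hs0 : (0:ℝ) ≤ q ^ N * t := by positivity
    have hs1 : q ^ N * t < 1 := by
      nlinarith [pow_le_one₀ hq0.le hq1.le (n := N), pow_pos hq0 N]
    have h1 : ∀ k : ℕ, (q ^ (N + 1) * t) ^ k = (q * (q ^ N * t)) ^ k := by
      intro k; congr 1; ring
    rw [tsum_congr (fun k => by rw [h1 k]), funcEq hq0 hq1 hs0 hs1, ih,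
      Finset.prod_range_succ]
    ring

lemma G_sub (s : ℝ) (hs0 : 0 ≤ s) (hs1 : s < 1) :
    (∑' k : ℕ, s ^ k * qPochR q (q ^ (k + 1))) - qPochR q q
      = ∑' k : ℕ, s ^ (k + 1) * qPochR q (q ^ (k + 1 + 1)) := by
  rw [Summable.tsum_eq_zero_add (summable_G hq0 hq1 hs0 hs1)]
  simp only [pow_zero, one_mul, pow_one]
  ring_nf

lemma G_tendsto {t : ℝ} (ht0 : 0 ≤ t) (ht1 : t < 1) :
    Filter.Tendsto (fun N : ℕ => ∑' k : ℕ, (q ^ N * t) ^ k * qPochR q (q ^ (k + 1)))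
      atTop (nhds (qPochR q q)) := by
  have key : ∀ N : ℕ, |(∑' k : ℕ, (q ^ N * t) ^ k * qPochR q (q ^ (k + 1))) - qPochR q q|
      ≤ q ^ N * (t / (1 - t)) := by
    intro N
    set s := q ^ N * t with hs
    have hs0 : (0:ℝ) ≤ s := by positivity
    have hst : s ≤ t := by
      calc s ≤ 1 * t := by apply mul_le_mul_of_nonneg_right (pow_le_one₀ hq0.le hq1.le) ht0
      _ = t := one_mul t
    have hs1 : s < 1 := lt_of_le_of_lt hst ht1
    rw [G_sub hq0 hq1 s hs0 hs1]
    have hsum2 : Summable fun k : ℕ => s ^ (k + 1) * qPochR q (q ^ (k + 1 + 1)) := by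
      apply Summable.of_nonneg_of_le (fun k => ?_) (fun k => ?_)
        ((summable_geometric_of_lt_one hs0 hs1).mul_left s)
      · have := (qPochR_pos hq0 hq1 (qpow_mem hq0 hq1 (k+1)).1 (qpow_mem hq0 hq1 (k+1)).2).le
        positivity
      · have h1 := qPochR_le_one hq0 hq1 (qpow_mem hq0 hq1 (k+1)).1 (qpow_mem hq0 hq1 (k+1)).2
        have h0 := (qPochR_pos hq0 hq1 (qpow_mem hq0 hq1 (k+1)).1 (qpow_mem hq0 hq1 (k+1)).2).le
        have : s ^ (k+1) ≤ s ^ k * s := by rw [pow_succ]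
        nlinarith [pow_nonneg hs0 k, pow_nonneg hs0 (k+1)]
    have hnn : 0 ≤ ∑' k : ℕ, s ^ (k + 1) * qPochR q (q ^ (k + 1 + 1)) := by
      apply tsum_nonneg; intro k
      have := (qPochR_pos hq0 hq1 (qpow_mem hq0 hq1 (k+1)).1 (qpow_mem hq0 hq1 (k+1)).2).le
      positivity
    rw [abs_of_nonneg hnn]
    have hub : (∑' k : ℕ, s ^ (k + 1) * qPochR q (q ^ (k + 1 + 1)))
        ≤ ∑' k : ℕ, s * s ^ k := by
      apply Summable.tsum_le_tsum (fun k => ?_) hsum2 ((summable_geometric_of_lt_one hs0 hs1).mul_left s)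
      have h1 := qPochR_le_one hq0 hq1 (qpow_mem hq0 hq1 (k+1)).1 (qpow_mem hq0 hq1 (k+1)).2
      have h0 := (qPochR_pos hq0 hq1 (qpow_mem hq0 hq1 (k+1)).1 (qpow_mem hq0 hq1 (k+1)).2).le
      have hps : s ^ (k+1) = s * s ^ k := by rw [pow_succ]; ring
      rw [hps]
      have hnn2 : (0:ℝ) ≤ s * s ^ k := by positivity
      calc s * s ^ k * qPochR q (q ^ (k + 1 + 1)) ≤ s * s ^ k * 1 :=
            mul_le_mul_of_nonneg_left h1 hnn2
        _ = s * s ^ k := mul_one _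
    have hgeo : (∑' k : ℕ, s * s ^ k) = s * (1 - s)⁻¹ := by
      rw [tsum_mul_left, tsum_geometric_of_lt_one hs0 hs1]
    have hfin : s * (1 - s)⁻¹ ≤ q ^ N * (t / (1 - t)) := by
      have h1t : (1 - s)⁻¹ ≤ (1 - t)⁻¹ := inv_anti₀ (by linarith) (by linarith)
      calc s * (1 - s)⁻¹ ≤ s * (1 - t)⁻¹ := mul_le_mul_of_nonneg_left h1t hs0
        _ = q ^ N * (t * (1 - t)⁻¹) := by rw [hs]; ring
        _ = q ^ N * (t / (1 - t)) := by rw [div_eq_mul_inv]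
    linarith
  have h0 : Filter.Tendsto (fun N : ℕ => q ^ N * (t / (1 - t))) atTop (nhds 0) := by
    simpa using (tendsto_pow_atTop_nhds_zero_of_lt_one hq0.le hq1).mul_const (t / (1 - t))
  have := squeeze_zero (f := fun N : ℕ =>
      |(∑' k : ℕ, (q ^ N * t) ^ k * qPochR q (q ^ (k + 1))) - qPochR q q|)
    (fun N => abs_nonneg _) key h0
  have h2 : Filter.Tendsto (fun N : ℕ =>
      (∑' k : ℕ, (q ^ N * t) ^ k * qPochR q (q ^ (k + 1))) - qPochR q q)
      atTop (nhds 0) := (tendsto_zero_iff_abs_tendsto_zero _).mpr this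
  have h3 := h2.add_const (qPochR q q)
  simpa using h3

lemma G_mul {t : ℝ} (ht0 : 0 ≤ t) (ht1 : t < 1) :
    (∑' k : ℕ, t ^ k * qPochR q (q ^ (k + 1))) * qPochR q t = qPochR q q := by
  have hm := multipliable_qPochR hq0 hq1 ht0 ht1
  have h1 : Filter.Tendsto (fun N : ℕ => ∏ j ∈ Finset.range N, (1 - q ^ j * t))
      atTop (nhds (qPochR q t)) := hm.hasProd.tendsto_prod_nat
  have h2 := h1.mul_const (∑' k : ℕ, t ^ k * qPochR q (q ^ (k + 1)))
  have h3 : Filter.Tendsto (fun N : ℕ => ∑' k : ℕ, (q ^ N * t) ^ k * qPochR q (q ^ (k + 1)))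
      atTop (nhds (qPochR q t * ∑' k : ℕ, t ^ k * qPochR q (q ^ (k + 1)))) := by
    apply h2.congr
    intro N
    exact (qsplit hq0 hq1 ht0 ht1 N).symm
  have := tendsto_nhds_unique h3 (G_tendsto hq0 hq1 ht0 ht1)
  linarith [this]

lemma euler {t : ℝ} (ht0 : 0 ≤ t) (ht1 : t < 1) :
    (∑' k : ℕ, t ^ k * qPochR q (q ^ (k + 1))) = qPochR q q / qPochR q t := by
  have hpos := qPochR_pos hq0 hq1 ht0 ht1
  rw [eq_div_iff hpos.ne']
  exact G_mul hq0 hq1 ht0 ht1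
end

/-- Let `0 < q < 1`, `a > 0` and `r > −1`.  Then
`∫_0^a ω^r·(qω/a;q)_∞ d_qω = (1−q)·a^{r+1}·(q;q)_∞/(q^{r+1};q)_∞`; explicitly,
`(1−q)·a^{r+1}·∑_{k=0}^∞ q^{k(r+1)}(q^{k+1};q)_∞ = (1−q)·a^{r+1}·(q;q)_∞/(q^{r+1};q)_∞`
(real powers). -/

theorem stmt_14 (q a r : ℝ) (hq0 : 0 < q) (hq1 : q < 1) (ha : 0 < a) (hr : -1 < r) :
    jackson0 q a (fun ω => ω ^ r * qPochR q (q * ω / a))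
      = (1 - q) * a ^ (r + 1) * qPochR q q / qPochR q (q ^ (r + 1)) ∧
    (1 - q) * a ^ (r + 1) * ∑' k : ℕ, q ^ ((k : ℝ) * (r + 1)) * qPochR q (q ^ (k + 1))
      = (1 - q) * a ^ (r + 1) * qPochR q q / qPochR q (q ^ (r + 1)) := by

  have hr1 : (0:ℝ) < r + 1 := by linarith
  have ht0 : 0 < q ^ (r + 1) := Real.rpow_pos_of_pos hq0 _
  have ht1 : q ^ (r + 1) < 1 := Real.rpow_lt_one hq0.le hq1 hr1
  have heuler := euler hq0 hq1 ht0.le ht1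
  have hterm : ∀ k : ℕ, q ^ ((k : ℝ) * (r + 1)) = (q ^ (r + 1)) ^ k := by
    intro k
    rw [mul_comm, Real.rpow_mul hq0.le, Real.rpow_natCast]
  have hsum2 : (∑' k : ℕ, q ^ ((k : ℝ) * (r + 1)) * qPochR q (q ^ (k + 1)))
      = qPochR q q / qPochR q (q ^ (r + 1)) := by
    rw [tsum_congr (fun k => by rw [hterm k])]
    exact heuler
  refine ⟨?_, by rw [hsum2]; ring⟩
  have hterm2 : ∀ k : ℕ, q ^ k * ((q ^ k * a) ^ r * qPochR q (q * (q ^ k * a) / a))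
      = a ^ r * (q ^ ((k : ℝ) * (r + 1)) * qPochR q (q ^ (k + 1))) := by
    intro k
    have harg : q * (q ^ k * a) / a = q ^ (k + 1) := by
      field_simp; ring
    have h1 : (q ^ k * a) ^ r = (q ^ k : ℝ) ^ r * a ^ r :=
      Real.mul_rpow (by positivity) ha.le
    have h3 : q ^ k * (q ^ k : ℝ) ^ r = q ^ ((k : ℝ) * (r + 1)) := by
      rw [← Real.rpow_natCast q k, ← Real.rpow_mul hq0.le, ← Real.rpow_add hq0]
      congr 1
      ring
    rw [harg, h1, ← h3]
    ring
  have hJ : (∑' k : ℕ, q ^ k * ((q ^ k * a) ^ r * qPochR q (q * (q ^ k * a) / a)))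
      = a ^ r * ∑' k : ℕ, q ^ ((k : ℝ) * (r + 1)) * qPochR q (q ^ (k + 1)) := by
    rw [← tsum_mul_left]
    exact tsum_congr hterm2
  have haar : a ^ (r + 1) = a ^ r * a := by
    rw [Real.rpow_add ha, Real.rpow_one]
  simp only [jackson0]
  rw [hJ, hsum2, haar]
  ring
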